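/- In any pure Nash equilibrium a of the game with Shapley payments, v(a) ≥ v(∅), where ∅ is the all-null strategy profile. -/

import Mathlib

open Finset

variable {m : ℕ}

def restrictProfile {A : Fin m → Type*} (null : ∀ t, A t) (a : ∀ t, A t)
    (J : Finset (Fin m)) : ∀ t, A t :=
  fun t => if t ∈ J then a t else null t

noncomputable def shapleySub {A : Fin m → Type*} (null : ∀ t, A t)
    (v : (∀ t, A t) → ℝ) (a : ∀ t, A t) (t : Fin m) : ℝ :=
  ∑ J ∈ (Finset.univ.erase t).powerset,
    ((J.card.factorial * (m - J.card - 1).factorial : ℝ) / (m.factorial : ℝ)) *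
      (v (restrictProfile null a (insert t J)) - v (restrictProfile null a J))

lemma restrict_univ {A : Fin m → Type*} (null a : ∀ t, A t) :
    restrictProfile null a univ = a := by
  funext s; simp [restrictProfile]

lemma restrict_empty {A : Fin m → Type*} (null a : ∀ t, A t) :
    restrictProfile null a ∅ = null := by
  funext s; simp [restrictProfile]

lemma shapley_null_zero {A : Fin m → Type*} (null : ∀ t, A t)
    (v : (∀ t, A t) → ℝ) (a : ∀ t, A t) (t : Fin m) :
    shapleySub null v (Function.update a t (null t)) t = 0 := by
  unfold shapleySub
  refine Finset.sum_eq_zero fun J hJ => ?_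
  have ht : t ∉ J := fun h => (Finset.mem_erase.1 ((Finset.mem_powerset.1 hJ) h)).1 rfl
  have : restrictProfile null (Function.update a t (null t)) (insert t J)
      = restrictProfile null (Function.update a t (null t)) J := by
    funext s
    unfold restrictProfile
    by_cases hs : s = t
    · subst hs; simp [ht]
    · simp [Function.update_of_ne hs, hs]
  rw [this]; ring

lemma efficiency {A : Fin m → Type*} (hm : 0 < m) (null : ∀ t, A t)
    (v : (∀ t, A t) → ℝ) (a : ∀ t, A t) :
    ∑ t, shapleySub null v a t = v a - v null := by
  set c : ℕ → ℝ := fun k => (k.factorial * (m - k - 1).factorial : ℝ) / (m.factorial : ℝ) with hc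
  set f : Finset (Fin m) → ℝ := fun S => v (restrictProfile null a S) with hf
  have step0 : ∑ t, shapleySub null v a t
      = (∑ t : Fin m, ∑ J ∈ (univ.erase t).powerset, c J.card * f (insert t J))
        - (∑ t : Fin m, ∑ J ∈ (univ.erase t).powerset, c J.card * f J) := by
    unfold shapleySub
    rw [← Finset.sum_sub_distrib]
    refine Finset.sum_congr rfl fun t _ => ?_
    rw [← Finset.sum_sub_distrib]
    refine Finset.sum_congr rfl fun J _ => ?_
    simp only [hc, hf]
    ring
  -- first sum
  have S1 : (∑ t : Fin m, ∑ J ∈ (univ.erase t).powerset, c J.card * f (insert t J))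
      = ∑ S ∈ univ.powerset.filter Finset.Nonempty, (S.card : ℝ) * (c (S.card - 1) * f S) := by
    rw [Finset.sum_sigma']
    have : ∑ S ∈ univ.powerset.filter Finset.Nonempty, (S.card : ℝ) * (c (S.card - 1) * f S)
        = ∑ y ∈ (univ.powerset.filter Finset.Nonempty).sigma (fun S => S),
            c (y.1.card - 1) * f y.1 := by
      rw [Finset.sum_sigma]
      refine Finset.sum_congr rfl fun S _ => ?_
      simp [mul_assoc]
    rw [this]
    refine Finset.sum_nbij' (fun x => ⟨insert x.1 x.2, x.1⟩) (fun y => ⟨y.2, y.1.erase y.2⟩)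
      ?_ ?_ ?_ ?_ ?_
    · rintro ⟨t, J⟩ hx
      simp only [Finset.mem_sigma, Finset.mem_powerset, Finset.mem_filter] at hx ⊢
      exact ⟨⟨Finset.subset_univ _, ⟨t, Finset.mem_insert_self t J⟩⟩, Finset.mem_insert_self t J⟩
    · rintro ⟨S, t⟩ hy
      simp only [Finset.mem_sigma, Finset.mem_powerset, Finset.mem_filter] at hy ⊢
      exact ⟨Finset.mem_univ t, Finset.erase_subset_erase t (Finset.subset_univ S)⟩
    · rintro ⟨t, J⟩ hx
      simp only [Finset.mem_sigma, Finset.mem_powerset] at hx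
      have ht : t ∉ J := fun h => (Finset.mem_erase.1 (hx.2 h)).1 rfl
      simp [Finset.erase_insert ht]
    · rintro ⟨S, t⟩ hy
      simp only [Finset.mem_sigma, Finset.mem_filter] at hy
      simp [Finset.insert_erase hy.2]
    · rintro ⟨t, J⟩ hx
      simp only [Finset.mem_sigma, Finset.mem_powerset] at hx
      have ht : t ∉ J := fun h => (Finset.mem_erase.1 (hx.2 h)).1 rfl
      simp [Finset.card_insert_of_notMem ht]
  -- second sum
  have hPt : ∀ t : Fin m, (univ.erase t).powerset
      = univ.powerset.filter (fun J => t ∉ J) := by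
    intro t; ext J; simp [Finset.subset_erase]
  have S2 : (∑ t : Fin m, ∑ J ∈ (univ.erase t).powerset, c J.card * f J)
      = ∑ J ∈ univ.powerset, ((m - J.card : ℕ) : ℝ) * (c J.card * f J) := by
    calc (∑ t : Fin m, ∑ J ∈ (univ.erase t).powerset, c J.card * f J)
        = ∑ t : Fin m, ∑ J ∈ univ.powerset, if t ∉ J then c J.card * f J else 0 := by
          refine Finset.sum_congr rfl fun t _ => ?_
          rw [hPt, Finset.sum_filter]
      _ = ∑ J ∈ univ.powerset, ∑ t : Fin m, if t ∉ J then c J.card * f J else 0 :=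
          Finset.sum_comm
      _ = ∑ J ∈ univ.powerset, ((m - J.card : ℕ) : ℝ) * (c J.card * f J) := by
          refine Finset.sum_congr rfl fun J _ => ?_
          rw [Finset.sum_ite, Finset.sum_const, Finset.sum_const_zero, add_zero, nsmul_eq_mul]
          congr 2
          have h1 : Finset.filter (fun t => t ∉ J) univ = Jᶜ := by
            ext t; simp
          rw [h1, Finset.card_compl, Fintype.card_fin]
  have hfm : (m.factorial : ℝ) ≠ 0 := Nat.cast_ne_zero.2 (Nat.factorial_ne_zero m)
  have harith : ∀ k : ℕ, 0 < k → k < m → (k : ℝ) * c (k - 1) = ((m - k : ℕ) : ℝ) * c k := by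
    intro k hk hkm
    have h1 : m - (k - 1) - 1 = m - k := by omega
    have h2 : k * (k - 1).factorial = k.factorial := Nat.mul_factorial_pred hk.ne'
    have h3 : (m - k) * (m - k - 1).factorial = (m - k).factorial :=
      Nat.mul_factorial_pred (by omega)
    have key : k * ((k - 1).factorial * (m - k).factorial)
        = (m - k) * (k.factorial * (m - k - 1).factorial) := by
      rw [← h2, ← h3]; ring
    simp only [hc, h1]
    rw [mul_div_assoc', mul_div_assoc']
    congr 1
    exact_mod_cast key
  -- combine
  have total : ∑ t, shapleySub null v a t
      = ∑ S ∈ univ.powerset,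
          ((if S.Nonempty then (S.card : ℝ) * (c (S.card - 1) * f S) else 0)
            - ((m - S.card : ℕ) : ℝ) * (c S.card * f S)) := by
    rw [step0, S1, S2, Finset.sum_filter, ← Finset.sum_sub_distrib]
  rw [total]
  have hne : (∅ : Finset (Fin m)) ≠ univ := by
    have : (univ : Finset (Fin m)).Nonempty := ⟨⟨0, hm⟩, Finset.mem_univ _⟩
    exact fun h => (by simp [← h] at this)
  have hsub : ({∅, univ} : Finset (Finset (Fin m))) ⊆ univ.powerset := by
    intro S hS
    simp only [Finset.mem_insert, Finset.mem_singleton] at hS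
    rcases hS with h | h <;> simp [h]
  have hzero : ∀ S ∈ univ.powerset, S ∉ ({∅, univ} : Finset (Finset (Fin m))) →
      ((if S.Nonempty then (S.card : ℝ) * (c (S.card - 1) * f S) else 0)
        - ((m - S.card : ℕ) : ℝ) * (c S.card * f S)) = 0 := by
    intro S _ hS
    simp only [Finset.mem_insert, Finset.mem_singleton, not_or] at hS
    have hSne : S.Nonempty := Finset.nonempty_iff_ne_empty.2 hS.1
    have hk : 0 < S.card := Finset.card_pos.2 hSne
    have hkm : S.card < m := by
      have h1 : S.card ≤ m := by
        simpa using Finset.card_le_card (Finset.subset_univ S)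
      rcases lt_or_eq_of_le h1 with h | h
      · exact h
      · exact absurd (Finset.eq_univ_of_card S (by simpa using h)) hS.2
    rw [if_pos hSne, ← mul_assoc, ← mul_assoc, harith S.card hk hkm]
    ring
  rw [← Finset.sum_subset hsub hzero, Finset.sum_pair hne]
  -- evaluate at ∅ and univ
  have hempty : ((if (∅ : Finset (Fin m)).Nonempty then
        ((∅ : Finset (Fin m)).card : ℝ) * (c ((∅ : Finset (Fin m)).card - 1) * f ∅) else 0)
      - ((m - (∅ : Finset (Fin m)).card : ℕ) : ℝ) * (c (∅ : Finset (Fin m)).card * f ∅))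
      = -(f ∅) := by
    rw [if_neg (by simp)]
    simp only [Finset.card_empty, Nat.sub_zero]
    have hc0 : (m : ℝ) * c 0 = 1 := by
      simp only [hc, Nat.factorial_zero, Nat.cast_one, one_mul, Nat.sub_zero]
      rw [mul_div_assoc']
      rw [div_eq_one_iff_eq hfm]
      exact_mod_cast Nat.mul_factorial_pred hm.ne'
    rw [← mul_assoc, hc0]
    ring
  have huniv : ((if (univ : Finset (Fin m)).Nonempty then
        ((univ : Finset (Fin m)).card : ℝ) * (c ((univ : Finset (Fin m)).card - 1) * f univ) else 0)
      - ((m - (univ : Finset (Fin m)).card : ℕ) : ℝ) * (c (univ : Finset (Fin m)).card * f univ))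
      = f univ := by
    rw [if_pos ⟨⟨0, hm⟩, Finset.mem_univ _⟩]
    simp only [Finset.card_univ, Fintype.card_fin, Nat.sub_self, Nat.cast_zero, zero_mul,
      sub_zero]
    have hcm : (m : ℝ) * c (m - 1) = 1 := by
      have h1 : m - (m - 1) - 1 = 0 := by omega
      simp only [hc, h1, Nat.factorial_zero, Nat.cast_one, mul_one]
      rw [mul_div_assoc', div_eq_one_iff_eq hfm]
      exact_mod_cast Nat.mul_factorial_pred hm.ne'
    rw [← mul_assoc, hcm]
    ring
  rw [hempty, huniv]
  simp only [hf, restrict_univ, restrict_empty]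
  ring

theorem shapley_nash_value_ge_null {A : Fin m → Type*} (null : ∀ t, A t)
    (v : (∀ t, A t) → ℝ) (a : ∀ t, A t)
    (hNE : ∀ (t : Fin m) (a' : A t),
      shapleySub null v (Function.update a t a') t ≤ shapleySub null v a t) :
    v null ≤ v a := by
  rcases Nat.eq_zero_or_pos m with hm | hm
  · subst hm
    have : a = null := funext fun t => t.elim0
    rw [this]
  · have hnn : ∀ t : Fin m, 0 ≤ shapleySub null v a t := by
      intro t
      have := hNE t (null t)
      rw [shapley_null_zero] at this
      exact this
    have hsum : 0 ≤ ∑ t, shapleySub null v a t :=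
      Finset.sum_nonneg fun t _ => hnn t
    rw [efficiency hm] at hsum
    linarith
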